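/- Let α > 0 and let Γ₁ = [a₁, a₁+α] × [b₁, b₁+α] and Γ₂ = [a₂, a₂+α] × [b₂, b₂+α] be two closed axis-parallel squares of side length α belonging to the same grid, i.e. a₂ − a₁ and b₂ − b₁ are integer multiples of α, and suppose Γ₁ and Γ₂ are non-neighbouring, i.e. max(|a₂ − a₁|, |b₂ − b₁|) ≥ 2α. Let A be a finite nonempty set of points in ℝ², let η > 0, and let 𝒞 be the maximal optimal partition of (A, η). Then there is at most one cluster C ∈ 𝒞 whose convex hull intersects both Γ₁ and Γ₂. -/

import Mathlib

noncomputable section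

/-- The Euclidean plane. -/
abbrev Plane := EuclideanSpace ℝ (Fin 2)

/-- Perimeter of a bounded set via Cauchy's formula. -/
noncomputable def perim (C : Set Plane) : ℝ :=
  ∫ θ in (0:ℝ)..(2 * Real.pi),
    sSup ((fun p : Plane => p 0 * Real.cos θ + p 1 * Real.sin θ) '' C)

/-- `P` is a partition of `A` into nonempty clusters. -/
def IsPartition (A : Set Plane) (P : Finset (Set Plane)) : Prop :=
  (∀ C ∈ P, (C : Set Plane).Nonempty) ∧
  (⋃₀ (P : Set (Set Plane)) = A) ∧
  ((P : Set (Set Plane)).PairwiseDisjoint id)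

/-- Cost of a partition with opening cost `η` per cluster. -/
noncomputable def cost (η : ℝ) (P : Finset (Set Plane)) : ℝ :=
  η * P.card + ∑ C ∈ P, perim C

/-- `P` is an optimal partition for `(A, η)`. -/
def IsOptimalPartition (η : ℝ) (A : Set Plane) (P : Finset (Set Plane)) : Prop :=
  IsPartition A P ∧ ∀ Q : Finset (Set Plane), IsPartition A Q → cost η P ≤ cost η Q

/-- `A` is indivisible for `η`: the one-block partition `{A}` is optimal. -/
def Indivisible (η : ℝ) (A : Set Plane) : Prop :=
  IsOptimalPartition η A {A}

/-- A maximal optimal partition of `(A, η)`. -/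
def IsMaximalOptimal (η : ℝ) (A : Set Plane) (P : Finset (Set Plane)) : Prop :=
  IsOptimalPartition η A P ∧
  ¬ ∃ Q : Finset (Set Plane), IsOptimalPartition η A Q ∧ Q.card < P.card ∧
      ∀ C ∈ P, ∃ C' ∈ Q, C ⊆ C'

/-- The closed axis-parallel square `[a, a+α] × [b, b+α]` in the plane. -/
def square (a b α : ℝ) : Set Plane :=
  {p : Plane | p 0 ∈ Set.Icc a (a + α) ∧ p 1 ∈ Set.Icc b (b + α)}


open Real intervalIntegral

lemma integral_abs_cos : ∫ θ in (0:ℝ)..(2*π), |Real.cos θ| = 4 := by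
  have pip := Real.pi_pos
  have hi : ∀ a b : ℝ, IntervalIntegrable (fun θ => |Real.cos θ|) MeasureTheory.volume a b :=
    fun a b => (Real.continuous_cos.abs).intervalIntegrable a b
  have h1 : ∫ θ in (0:ℝ)..(π/2), |Real.cos θ| = 1 := by
    rw [intervalIntegral.integral_congr (g := Real.cos)]
    · simp [integral_cos]
    · intro x hx
      rw [Set.uIcc_of_le (by positivity)] at hx
      exact abs_of_nonneg (Real.cos_nonneg_of_mem_Icc ⟨by linarith [hx.1], hx.2⟩)
  have h2 : ∫ θ in (π/2:ℝ)..(3*π/2), |Real.cos θ| = 2 := by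
    rw [intervalIntegral.integral_congr (g := fun θ => -Real.cos θ)]
    · rw [intervalIntegral.integral_neg, integral_cos]
      simp [show (3*π/2 : ℝ) = π + π/2 by ring, Real.sin_add]; norm_num
    · intro x hx
      rw [Set.uIcc_of_le (by linarith)] at hx
      have := Real.cos_nonpos_of_pi_div_two_le_of_le hx.1 (by linarith [hx.2])
      simp [abs_of_nonpos this]
  have h3 : ∫ θ in (3*π/2:ℝ)..(2*π), |Real.cos θ| = 1 := by
    rw [intervalIntegral.integral_congr (g := Real.cos)]
    · rw [integral_cos, Real.sin_two_pi]
      simp [show (3*π/2 : ℝ) = π + π/2 by ring, Real.sin_add]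
    · intro x hx
      rw [Set.uIcc_of_le (by linarith)] at hx
      have h2x : Real.cos x = Real.cos (2*π - x) := by
        rw [Real.cos_sub, Real.cos_two_pi, Real.sin_two_pi]; ring
      show |Real.cos x| = Real.cos x
      rw [h2x] at *
      refine abs_of_nonneg (Real.cos_nonneg_of_mem_Icc ⟨?_, ?_⟩) <;>
        [linarith [hx.2]; linarith [hx.1]]
  have e1 := intervalIntegral.integral_add_adjacent_intervals (hi 0 (π/2)) (hi (π/2) (3*π/2))
  have e2 := intervalIntegral.integral_add_adjacent_intervals (hi 0 (3*π/2)) (hi (3*π/2) (2*π))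
  linarith



lemma integral_abs_ell (c₁ c₂ : ℝ) :
    ∫ θ in (0:ℝ)..(2*π), |c₁ * Real.cos θ + c₂ * Real.sin θ|
      = 4 * Real.sqrt (c₁^2 + c₂^2) := by
  rcases eq_or_ne (c₁^2 + c₂^2) 0 with h0 | h0
  · have hc₁ : c₁ = 0 := by nlinarith [sq_nonneg c₁, sq_nonneg c₂]
    have hc₂ : c₂ = 0 := by nlinarith [sq_nonneg c₁, sq_nonneg c₂]
    simp [hc₁, hc₂]
  · set r := Real.sqrt (c₁^2 + c₂^2) with hr
    have hrpos : 0 < r := Real.sqrt_pos.mpr (lt_of_le_of_ne (by positivity) (Ne.symm h0))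
    set z : ℂ := ⟨c₁, c₂⟩ with hz
    have hzne : z ≠ 0 := by
      intro h
      apply h0
      have : c₁ = 0 ∧ c₂ = 0 := by
        constructor <;> [exact congrArg Complex.re h; exact congrArg Complex.im h]
      simp [this.1, this.2]
    have habs : ‖z‖ = r := by
      rw [Complex.norm_def, Complex.normSq_mk]; rw [hr]; ring_nf
    set φ := Complex.arg z with hφ
    have hcos : Real.cos φ = c₁ / r := by rw [hφ, Complex.cos_arg hzne, habs]
    have hsin : Real.sin φ = c₂ / r := by rw [hφ, Complex.sin_arg, habs]
    have key : ∀ θ : ℝ, c₁ * Real.cos θ + c₂ * Real.sin θ = r * Real.cos (θ - φ) := by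
      intro θ
      rw [Real.cos_sub, hcos, hsin]
      field_simp
    calc ∫ θ in (0:ℝ)..(2*π), |c₁ * Real.cos θ + c₂ * Real.sin θ|
        = ∫ θ in (0:ℝ)..(2*π), r * |Real.cos (θ - φ)| := by
          apply intervalIntegral.integral_congr
          intro θ _
          show |c₁ * Real.cos θ + c₂ * Real.sin θ| = r * |Real.cos (θ - φ)|
          rw [key θ, abs_mul, abs_of_pos hrpos]
      _ = r * ∫ θ in (0:ℝ)..(2*π), |Real.cos (θ - φ)| := intervalIntegral.integral_const_mul _ _
      _ = r * ∫ θ in (0:ℝ)-φ..(2*π)-φ, |Real.cos θ| := by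
          rw [intervalIntegral.integral_comp_sub_right (fun θ => |Real.cos θ|) φ]
      _ = r * ∫ θ in (0:ℝ)..(2*π), |Real.cos θ| := by
          congr 1
          have hper : Function.Periodic (fun θ => |Real.cos θ|) (2*π) :=
            fun x => by simp [Real.cos_add_two_pi]
          have := hper.intervalIntegral_add_eq (0 - φ) 0
          rw [show (0:ℝ) - φ + 2*π = 2*π - φ by ring, show (0:ℝ) + 2*π = 2*π by ring] at this
          exact this
      _ = 4 * r := by rw [integral_abs_cos]; ring

/-- The support evaluation function. -/
noncomputable def ell (θ : ℝ) (p : Plane) : ℝ := p 0 * Real.cos θ + p 1 * Real.sin θ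

lemma ell_continuous (p : Plane) : Continuous fun θ => ell θ p := by
  unfold ell; fun_prop

lemma norm_plane (z w : Plane) : ‖z - w‖ = Real.sqrt ((z 0 - w 0)^2 + (z 1 - w 1)^2) := by
  rw [EuclideanSpace.norm_eq]
  simp [Fin.sum_univ_two, Real.norm_eq_abs, sq_abs]

lemma integral_ell (p : Plane) : ∫ θ in (0:ℝ)..(2*π), ell θ p = 0 := by
  unfold ell
  rw [intervalIntegral.integral_add ((by fun_prop : Continuous fun θ:ℝ => p 0 * Real.cos θ).intervalIntegrable _ _)
    ((by fun_prop : Continuous fun θ:ℝ => p 1 * Real.sin θ).intervalIntegrable _ _),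
    intervalIntegral.integral_const_mul, intervalIntegral.integral_const_mul,
    integral_cos, integral_sin]
  simp

lemma integral_abs_ell_sub (z w : Plane) :
    ∫ θ in (0:ℝ)..(2*π), |ell θ z - ell θ w| = 4 * ‖z - w‖ := by
  have : ∀ θ, |ell θ z - ell θ w| = |(z 0 - w 0) * Real.cos θ + (z 1 - w 1) * Real.sin θ| := by
    intro θ; unfold ell; ring_nf
  rw [intervalIntegral.integral_congr (fun θ _ => this θ), integral_abs_ell, norm_plane]

/-- pointwise: twice (max - min) of four reals is at most the cyclic sum of |differences|. -/
lemma cyclic_bound (c₁ c₂ c₃ c₄ : ℝ) :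
    2 * (max (max c₁ c₂) (max c₃ c₄) - min (min c₁ c₂) (min c₃ c₄))
      ≤ |c₁ - c₂| + |c₂ - c₃| + |c₃ - c₄| + |c₄ - c₁| := by
  have a1 := le_abs_self (c₁ - c₂); have a2 := neg_abs_le (c₁ - c₂)
  have b1 := le_abs_self (c₂ - c₃); have b2 := neg_abs_le (c₂ - c₃)
  have d1 := le_abs_self (c₃ - c₄); have d2 := neg_abs_le (c₃ - c₄)
  have e1 := le_abs_self (c₄ - c₁); have e2 := neg_abs_le (c₄ - c₁)
  have H : max (max c₁ c₂) (max c₃ c₄) - min (min c₁ c₂) (min c₃ c₄)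
      ≤ (|c₁ - c₂| + |c₂ - c₃| + |c₃ - c₄| + |c₄ - c₁|) / 2 := by
    rw [sub_le_iff_le_add]
    refine max_le (max_le ?_ ?_) (max_le ?_ ?_) <;>
      rw [← sub_le_iff_le_add'] <;>
      refine le_min (le_min ?_ ?_) (le_min ?_ ?_) <;> linarith
  linarith



lemma ell_add_pi (θ : ℝ) (p : Plane) : ell (θ + π) p = - ell θ p := by
  unfold ell; rw [Real.cos_add_pi, Real.sin_add_pi]; ring

/-- integral of max of four support evaluations is at most the cyclic edge-length sum. -/
lemma integral_max4 (z₁ z₂ z₃ z₄ : Plane) :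
    ∫ θ in (0:ℝ)..(2*π), max (max (ell θ z₁) (ell θ z₂)) (max (ell θ z₃) (ell θ z₄))
      ≤ ‖z₁ - z₂‖ + ‖z₂ - z₃‖ + ‖z₃ - z₄‖ + ‖z₄ - z₁‖ := by
  set M : ℝ → ℝ := fun θ => max (max (ell θ z₁) (ell θ z₂)) (max (ell θ z₃) (ell θ z₄)) with hM
  set m : ℝ → ℝ := fun θ => min (min (ell θ z₁) (ell θ z₂)) (min (ell θ z₃) (ell θ z₄)) with hm
  have hMc : Continuous M := by
    apply Continuous.max <;> apply Continuous.max <;> exact ell_continuous _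
  have hmc : Continuous m := by
    apply Continuous.min <;> apply Continuous.min <;> exact ell_continuous _
  have hMper : Function.Periodic M (2*π) := by
    intro x
    simp only [hM, ell, Real.cos_add_two_pi, Real.sin_add_two_pi]
  have hshift : ∀ θ, M (θ + π) = - m θ := by
    intro θ
    simp only [hM, hm, ell_add_pi, max_neg_neg]
  have key : ∫ θ in (0:ℝ)..(2*π), M θ = - ∫ θ in (0:ℝ)..(2*π), m θ := by
    have h1 : ∫ θ in (0:ℝ)..(2*π), M (θ + π) = ∫ θ in (0:ℝ)..(2*π), M θ := by
      rw [intervalIntegral.integral_comp_add_right M π, show (0:ℝ)+π = π by ring,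
        show 2*π+π = π+2*π by ring, hMper.intervalIntegral_add_eq π 0,
        show (0:ℝ)+2*π = 2*π by ring]
    rw [← h1, intervalIntegral.integral_congr (g := fun θ => - m θ) (fun θ _ => hshift θ),
      intervalIntegral.integral_neg]
  have hpt : ∀ θ ∈ Set.uIcc (0:ℝ) (2*π), 2 * (M θ - m θ) ≤
      |ell θ z₁ - ell θ z₂| + |ell θ z₂ - ell θ z₃| + |ell θ z₃ - ell θ z₄| + |ell θ z₄ - ell θ z₁| :=
    fun θ _ => cyclic_bound _ _ _ _
  have hint : ∫ θ in (0:ℝ)..(2*π), 2 * (M θ - m θ) ≤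
      ∫ θ in (0:ℝ)..(2*π), (|ell θ z₁ - ell θ z₂| + |ell θ z₂ - ell θ z₃| +
        |ell θ z₃ - ell θ z₄| + |ell θ z₄ - ell θ z₁|) := by
    apply intervalIntegral.integral_mono_on (by positivity)
    · exact (by fun_prop : Continuous fun θ => 2 * (M θ - m θ)).intervalIntegrable _ _
    · have : ∀ i j : Plane, Continuous fun θ => |ell θ i - ell θ j| := by
        intro i j; exact ((ell_continuous i).sub (ell_continuous j)).abs
      exact (((((this _ _).add (this _ _)).add (this _ _)).add (this _ _))).intervalIntegrable _ _
    · intro θ hθ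
      exact hpt θ (by rw [Set.uIcc_of_le (by positivity)]; exact hθ)
  have lhs_eq : ∫ θ in (0:ℝ)..(2*π), 2 * (M θ - m θ) = 4 * ∫ θ in (0:ℝ)..(2*π), M θ := by
    rw [intervalIntegral.integral_const_mul,
      intervalIntegral.integral_sub (hMc.intervalIntegrable _ _) (hmc.intervalIntegrable _ _), key]
    ring
  have rhs_eq : ∫ θ in (0:ℝ)..(2*π), (|ell θ z₁ - ell θ z₂| + |ell θ z₂ - ell θ z₃| +
        |ell θ z₃ - ell θ z₄| + |ell θ z₄ - ell θ z₁|)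
      = 4 * (‖z₁ - z₂‖ + ‖z₂ - z₃‖ + ‖z₃ - z₄‖ + ‖z₄ - z₁‖) := by
    have hii : ∀ i j : Plane, IntervalIntegrable (fun θ => |ell θ i - ell θ j|)
        MeasureTheory.volume 0 (2*π) := by
      intro i j; exact (((ell_continuous i).sub (ell_continuous j)).abs).intervalIntegrable _ _
    rw [intervalIntegral.integral_add (((hii _ _).add (hii _ _)).add (hii _ _)) (hii _ _),
      intervalIntegral.integral_add ((hii _ _).add (hii _ _)) (hii _ _),
      intervalIntegral.integral_add (hii _ _) (hii _ _),
      integral_abs_ell_sub, integral_abs_ell_sub, integral_abs_ell_sub, integral_abs_ell_sub]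
    ring
  rw [lhs_eq, rhs_eq] at hint
  linarith



/-- sSup over a finite nonempty set as a Finset.sup'. -/
lemma sSup_image_eq_sup' {C : Set Plane} (hC : C.Finite) (hne : C.Nonempty) (θ : ℝ) :
    sSup ((fun p : Plane => ell θ p) '' C)
      = hC.toFinset.sup' (by simpa using hne) (fun p => ell θ p) := by
  rw [Finset.sup'_eq_csSup_image, Set.Finite.coe_toFinset]

lemma sup'_continuous {C : Set Plane} (hC : C.Finite) (hne : C.Nonempty) :
    Continuous fun θ => hC.toFinset.sup' (by simpa using hne) (fun p => ell θ p) := by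
  have : ∀ θ, hC.toFinset.sup' (by simpa using hne) (fun p => ell θ p)
      = hC.toFinset.sup' (by simpa using hne) (fun p => (fun t => ell t p) θ) := fun θ => rfl
  apply continuous_iff_continuousAt.mpr
  intro x
  exact ContinuousAt.finset_sup'_apply _ (fun i _ => (ell_continuous i).continuousAt)

lemma le_sup'_of_mem_hull {C : Set Plane} (hC : C.Finite) (hne : C.Nonempty) (θ : ℝ)
    {z : Plane} (hz : z ∈ convexHull ℝ C) :
    ell θ z ≤ hC.toFinset.sup' (by simpa using hne) (fun p => ell θ p) := by
  set M := hC.toFinset.sup' (by simpa using hne) (fun p => ell θ p) with hM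
  have hsub : C ⊆ {w : Plane | ell θ w ≤ M} := by
    intro p hp
    exact Finset.le_sup' (fun p => ell θ p) (hC.mem_toFinset.mpr hp)
  have hconv : Convex ℝ {w : Plane | ell θ w ≤ M} := by
    have hlin : IsLinearMap ℝ (fun w : Plane => ell θ w) := by
      constructor
      · intro x y; simp only [ell, PiLp.add_apply]; ring
      · intro c x; simp only [ell, PiLp.smul_apply, smul_eq_mul]; ring
    exact convex_halfSpace_le hlin M
  exact convexHull_min hsub hconv hz

/-- The central perimeter inequality for merging two clusters. -/
lemma perim_union_le {C₁ C₂ : Set Plane} (h₁f : C₁.Finite) (h₁n : C₁.Nonempty)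
    (h₂f : C₂.Finite) (h₂n : C₂.Nonempty) {p₁ q₁ p₂ q₂ : Plane}
    (hp₁ : p₁ ∈ convexHull ℝ C₁) (hq₁ : q₁ ∈ convexHull ℝ C₁)
    (hp₂ : p₂ ∈ convexHull ℝ C₂) (hq₂ : q₂ ∈ convexHull ℝ C₂)
    (hkey : ‖p₁ - p₂‖ + ‖q₁ - q₂‖ ≤ ‖p₁ - q₁‖ + ‖p₂ - q₂‖) :
    perim (C₁ ∪ C₂) ≤ perim C₁ + perim C₂ := by
  classical
  set s₁ := h₁f.toFinset
  set s₂ := h₂f.toFinset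
  have hne₁ : s₁.Nonempty := by simpa [s₁] using h₁n
  have hne₂ : s₂.Nonempty := by simpa [s₂] using h₂n
  set f₁ : ℝ → ℝ := fun θ => s₁.sup' (by simpa [s₁] using h₁n) (fun p => ell θ p) with hf₁
  set f₂ : ℝ → ℝ := fun θ => s₂.sup' (by simpa [s₂] using h₂n) (fun p => ell θ p) with hf₂
  have hc₁ : Continuous f₁ := sup'_continuous h₁f h₁n
  have hc₂ : Continuous f₂ := sup'_continuous h₂f h₂n
  set g₁ : ℝ → ℝ := fun θ => max (ell θ p₁) (ell θ q₁) with hg₁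
  set g₂ : ℝ → ℝ := fun θ => max (ell θ p₂) (ell θ q₂) with hg₂
  have hcg₁ : Continuous g₁ := (ell_continuous p₁).max (ell_continuous q₁)
  have hcg₂ : Continuous g₂ := (ell_continuous p₂).max (ell_continuous q₂)
  -- perim identities
  have hperim : ∀ (C : Set Plane) (hf : C.Finite) (hn : C.Nonempty),
      perim C = ∫ θ in (0:ℝ)..(2*π), hf.toFinset.sup' (by simpa using hn) (fun p => ell θ p) := by
    intro C hf hn
    unfold perim
    apply intervalIntegral.integral_congr
    intro θ _
    exact sSup_image_eq_sup' hf hn θ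
  have hP₁ : perim C₁ = ∫ θ in (0:ℝ)..(2*π), f₁ θ := hperim C₁ h₁f h₁n
  have hP₂ : perim C₂ = ∫ θ in (0:ℝ)..(2*π), f₂ θ := hperim C₂ h₂f h₂n
  -- the union
  have hPu : perim (C₁ ∪ C₂) = ∫ θ in (0:ℝ)..(2*π), max (f₁ θ) (f₂ θ) := by
    unfold perim
    apply intervalIntegral.integral_congr
    intro θ _
    show sSup ((fun p : Plane => p 0 * Real.cos θ + p 1 * Real.sin θ) '' (C₁ ∪ C₂))
      = max (f₁ θ) (f₂ θ)
    have him : (fun p : Plane => p 0 * Real.cos θ + p 1 * Real.sin θ) '' (C₁ ∪ C₂)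
        = (fun p => ell θ p) '' C₁ ∪ (fun p => ell θ p) '' C₂ := by
      rw [Set.image_union]; rfl
    rw [him, csSup_union ((h₁f.image _).bddAbove) (h₁n.image _)
      ((h₂f.image _).bddAbove) (h₂n.image _)]
    rw [sSup_image_eq_sup' h₁f h₁n θ, sSup_image_eq_sup' h₂f h₂n θ]
  -- pointwise bounds
  have hgf₁ : ∀ θ, g₁ θ ≤ f₁ θ := fun θ =>
    max_le (le_sup'_of_mem_hull h₁f h₁n θ hp₁) (le_sup'_of_mem_hull h₁f h₁n θ hq₁)
  have hgf₂ : ∀ θ, g₂ θ ≤ f₂ θ := fun θ =>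
    max_le (le_sup'_of_mem_hull h₂f h₂n θ hp₂) (le_sup'_of_mem_hull h₂f h₂n θ hq₂)
  -- main integral estimate
  have step1 : ∫ θ in (0:ℝ)..(2*π), max (f₁ θ) (f₂ θ)
      ≤ ∫ θ in (0:ℝ)..(2*π), (f₁ θ + f₂ θ - min (g₁ θ) (g₂ θ)) := by
    apply intervalIntegral.integral_mono_on (by positivity)
    · exact (hc₁.max hc₂).intervalIntegrable _ _
    · exact ((hc₁.add hc₂).sub (hcg₁.min hcg₂)).intervalIntegrable _ _
    · intro θ _
      rcases max_cases (f₁ θ) (f₂ θ) with ⟨h, _⟩ | ⟨h, _⟩ <;> rw [h]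
      · have : min (g₁ θ) (g₂ θ) ≤ f₂ θ := le_trans (min_le_right _ _) (hgf₂ θ)
        linarith
      · have : min (g₁ θ) (g₂ θ) ≤ f₁ θ := le_trans (min_le_left _ _) (hgf₁ θ)
        linarith
  have step2 : ∫ θ in (0:ℝ)..(2*π), (f₁ θ + f₂ θ - min (g₁ θ) (g₂ θ))
      = (∫ θ in (0:ℝ)..(2*π), f₁ θ) + (∫ θ in (0:ℝ)..(2*π), f₂ θ)
        - ∫ θ in (0:ℝ)..(2*π), min (g₁ θ) (g₂ θ) := by
    rw [intervalIntegral.integral_sub (f := fun θ => f₁ θ + f₂ θ) ((hc₁.add hc₂).intervalIntegrable _ _)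
      ((hcg₁.min hcg₂).intervalIntegrable _ _),
      intervalIntegral.integral_add (hc₁.intervalIntegrable _ _) (hc₂.intervalIntegrable _ _)]
  -- lower bound for the min integral
  have hming : ∫ θ in (0:ℝ)..(2*π), min (g₁ θ) (g₂ θ) ≥ 0 := by
    have hminmax : ∀ θ, min (g₁ θ) (g₂ θ) = g₁ θ + g₂ θ - max (g₁ θ) (g₂ θ) := by
      intro θ; rcases le_total (g₁ θ) (g₂ θ) with h | h <;>
        simp [min_eq_left, min_eq_right, max_eq_left, max_eq_right, h] <;> ring
    rw [intervalIntegral.integral_congr (g := fun θ => g₁ θ + g₂ θ - max (g₁ θ) (g₂ θ))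
      (fun θ _ => hminmax θ),
      intervalIntegral.integral_sub (f := fun θ => g₁ θ + g₂ θ) ((hcg₁.add hcg₂).intervalIntegrable _ _)
        ((hcg₁.max hcg₂).intervalIntegrable _ _),
      intervalIntegral.integral_add (hcg₁.intervalIntegrable _ _) (hcg₂.intervalIntegrable _ _)]
    -- ∫ g_i = 2‖p_i - q_i‖
    have hg_int : ∀ p q : Plane, ∫ θ in (0:ℝ)..(2*π), max (ell θ p) (ell θ q)
        = 2 * ‖p - q‖ := by
      intro p q
      have hid : ∀ θ, max (ell θ p) (ell θ q)
          = (ell θ p + ell θ q) / 2 + |ell θ p - ell θ q| / 2 := by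
        intro θ; rcases le_total (ell θ p) (ell θ q) with h | h
        · rw [max_eq_right h, abs_of_nonpos (by linarith)]; ring
        · rw [max_eq_left h, abs_of_nonneg (by linarith)]; ring
      rw [intervalIntegral.integral_congr (g := fun θ => (ell θ p + ell θ q) / 2
          + |ell θ p - ell θ q| / 2) (fun θ _ => hid θ)]
      have i1 : IntervalIntegrable (fun θ => (ell θ p + ell θ q) / 2)
          MeasureTheory.volume 0 (2*π) :=
        (((ell_continuous p).add (ell_continuous q)).div_const 2).intervalIntegrable _ _
      have i2 : IntervalIntegrable (fun θ => |ell θ p - ell θ q| / 2)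
          MeasureTheory.volume 0 (2*π) :=
        ((((ell_continuous p).sub (ell_continuous q)).abs).div_const 2).intervalIntegrable _ _
      rw [intervalIntegral.integral_add i1 i2, intervalIntegral.integral_div,
        intervalIntegral.integral_div,
        intervalIntegral.integral_add ((ell_continuous p).intervalIntegrable _ _)
          ((ell_continuous q).intervalIntegrable _ _),
        integral_ell, integral_ell, integral_abs_ell_sub]
      ring
    have hgmax : ∫ θ in (0:ℝ)..(2*π), max (g₁ θ) (g₂ θ)
        ≤ ‖p₁ - q₁‖ + ‖q₁ - q₂‖ + ‖q₂ - p₂‖ + ‖p₂ - p₁‖ := by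
      have := integral_max4 p₁ q₁ q₂ p₂
      -- max (g₁ θ) (g₂ θ) = max (max ell p₁ ell q₁) (max ell q₂ ell p₂)
      have hco : ∀ θ, max (g₁ θ) (g₂ θ)
          = max (max (ell θ p₁) (ell θ q₁)) (max (ell θ q₂) (ell θ p₂)) := by
        intro θ; simp only [hg₁, hg₂]; rw [max_comm (ell θ p₂) (ell θ q₂)]
      rw [intervalIntegral.integral_congr (g := fun θ => max (max (ell θ p₁) (ell θ q₁))
        (max (ell θ q₂) (ell θ p₂))) (fun θ _ => hco θ)]
      exact this
    rw [hg_int p₁ q₁, hg_int p₂ q₂]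
    have h1 : ‖q₂ - p₂‖ = ‖p₂ - q₂‖ := norm_sub_rev _ _
    have h2 : ‖p₂ - p₁‖ = ‖p₁ - p₂‖ := norm_sub_rev _ _
    rw [h1, h2] at hgmax
    linarith
  rw [hPu, hP₁, hP₂]
  calc ∫ θ in (0:ℝ)..(2*π), max (f₁ θ) (f₂ θ)
      ≤ (∫ θ in (0:ℝ)..(2*π), f₁ θ) + (∫ θ in (0:ℝ)..(2*π), f₂ θ)
        - ∫ θ in (0:ℝ)..(2*π), min (g₁ θ) (g₂ θ) := by rw [← step2]; exact step1
    _ ≤ _ := by linarith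


/-- 1D four-point inequality. -/
lemma oned {α A₁ A₂ x₁ x₂ X₁ X₂ y₁ y₂ Y₁ Y₂ : ℝ}
    (hA : A₁ + 2*α ≤ A₂)
    (hx₁ : x₁ ≤ A₁ + α) (hx₂ : x₂ ≤ A₁ + α)
    (hX₁ : A₂ ≤ X₁) (hX₂ : A₂ ≤ X₂)
    (hy : |y₁ - y₂| ≤ α) (hY : |Y₁ - Y₂| ≤ α) :
    Real.sqrt ((x₁-x₂)^2 + (y₁-y₂)^2) + Real.sqrt ((X₁-X₂)^2 + (Y₁-Y₂)^2)
      ≤ Real.sqrt ((x₁-X₁)^2 + (y₁-Y₁)^2) + Real.sqrt ((x₂-X₂)^2 + (y₂-Y₂)^2) := by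
  have sqle : ∀ u v : ℝ, Real.sqrt (u^2 + v^2) ≤ |u| + |v| := by
    intro u v
    rw [show |u| + |v| = Real.sqrt ((|u| + |v|)^2) from
      (Real.sqrt_sq (by positivity)).symm]
    apply Real.sqrt_le_sqrt
    have := abs_nonneg u; have := abs_nonneg v
    nlinarith [sq_abs u, sq_abs v, mul_nonneg (abs_nonneg u) (abs_nonneg v)]
  have sqge : ∀ u v : ℝ, |u| ≤ Real.sqrt (u^2 + v^2) := by
    intro u v
    rw [show |u| = Real.sqrt (u^2) by rw [Real.sqrt_sq_eq_abs]]
    exact Real.sqrt_le_sqrt (by nlinarith [sq_nonneg v])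
  have h1 := sqle (x₁-x₂) (y₁-y₂)
  have h2 := sqle (X₁-X₂) (Y₁-Y₂)
  have h3 := sqge (x₁-X₁) (y₁-Y₁)
  have h4 := sqge (x₂-X₂) (y₂-Y₂)
  have e3 : X₁ - x₁ ≤ |x₁ - X₁| := by rw [abs_sub_comm]; exact le_abs_self _
  have e4 : X₂ - x₂ ≤ |x₂ - X₂| := by rw [abs_sub_comm]; exact le_abs_self _
  have hxx : |x₁ - x₂| ≤ (A₁ + α - x₁) + (A₁ + α - x₂) := by
    rw [abs_sub_le_iff]; constructor <;> linarith
  have hXX : |X₁ - X₂| ≤ (X₁ - A₂) + (X₂ - A₂) := by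
    rw [abs_sub_le_iff]; constructor <;> linarith
  linarith


lemma norm_plane' (z w : Plane) : ‖z - w‖ = Real.sqrt ((z 1 - w 1)^2 + (z 0 - w 0)^2) := by
  rw [norm_plane, add_comm]

lemma key_ineq {α a₁ b₁ a₂ b₂ : ℝ} (hα : 0 < α)
    (hfar : max |a₂ - a₁| |b₂ - b₁| ≥ 2 * α)
    {p₁ q₁ p₂ q₂ : Plane}
    (hp₁ : p₁ ∈ square a₁ b₁ α) (hq₁ : q₁ ∈ square a₂ b₂ α)
    (hp₂ : p₂ ∈ square a₁ b₁ α) (hq₂ : q₂ ∈ square a₂ b₂ α) :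
    ‖p₁ - p₂‖ + ‖q₁ - q₂‖ ≤ ‖p₁ - q₁‖ + ‖p₂ - q₂‖ := by
  obtain ⟨⟨hp₁0, hp₁0'⟩, ⟨hp₁1, hp₁1'⟩⟩ := hp₁
  obtain ⟨⟨hq₁0, hq₁0'⟩, ⟨hq₁1, hq₁1'⟩⟩ := hq₁
  obtain ⟨⟨hp₂0, hp₂0'⟩, ⟨hp₂1, hp₂1'⟩⟩ := hp₂
  obtain ⟨⟨hq₂0, hq₂0'⟩, ⟨hq₂1, hq₂1'⟩⟩ := hq₂
  have habp : |p₁ 1 - p₂ 1| ≤ α := by rw [abs_sub_le_iff]; constructor <;> linarith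
  have habq : |q₁ 1 - q₂ 1| ≤ α := by rw [abs_sub_le_iff]; constructor <;> linarith
  have habp0 : |p₁ 0 - p₂ 0| ≤ α := by rw [abs_sub_le_iff]; constructor <;> linarith
  have habq0 : |q₁ 0 - q₂ 0| ≤ α := by rw [abs_sub_le_iff]; constructor <;> linarith
  rcases le_max_iff.mp hfar with hx | hy
  · rcases le_abs.mp hx with h | h
    · -- a₁ + 2α ≤ a₂
      rw [norm_plane p₁ p₂, norm_plane q₁ q₂, norm_plane p₁ q₁, norm_plane p₂ q₂]
      exact oned (α := α) (A₁ := a₁) (A₂ := a₂) (by linarith) hp₁0' hp₂0' (by linarith) (by linarith) habp habq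
    · -- a₂ + 2α ≤ a₁
      rw [norm_sub_rev p₁ q₁, norm_sub_rev p₂ q₂, add_comm ‖p₁ - p₂‖ ‖q₁ - q₂‖]
      rw [norm_plane q₁ q₂, norm_plane p₁ p₂, norm_plane q₁ p₁, norm_plane q₂ p₂]
      exact oned (α := α) (A₁ := a₂) (A₂ := a₁) (by linarith) hq₁0' hq₂0' (by linarith) (by linarith) habq habp
  · rcases le_abs.mp hy with h | h
    · rw [norm_plane' p₁ p₂, norm_plane' q₁ q₂, norm_plane' p₁ q₁, norm_plane' p₂ q₂]
      exact oned (α := α) (A₁ := b₁) (A₂ := b₂) (by linarith) hp₁1' hp₂1' (by linarith) (by linarith) habp0 habq0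
    · rw [norm_sub_rev p₁ q₁, norm_sub_rev p₂ q₂, add_comm ‖p₁ - p₂‖ ‖q₁ - q₂‖]
      rw [norm_plane' q₁ q₂, norm_plane' p₁ p₂, norm_plane' q₁ p₁, norm_plane' q₂ p₂]
      exact oned (α := α) (A₁ := b₂) (A₂ := b₁) (by linarith) hq₁1' hq₂1' (by linarith) (by linarith) habq0 habp0


theorem at_most_one_cluster_intersecting_two_far_cells
    (α : ℝ) (hα : 0 < α) (a₁ b₁ a₂ b₂ : ℝ)
    (hgridx : ∃ m : ℤ, a₂ - a₁ = (m : ℝ) * α)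
    (hgridy : ∃ m : ℤ, b₂ - b₁ = (m : ℝ) * α)
    (hfar : max |a₂ - a₁| |b₂ - b₁| ≥ 2 * α)
    (A : Set Plane) (hA : A.Finite) (hAne : A.Nonempty) (η : ℝ) (hη : 0 < η)
    (P : Finset (Set Plane)) (hP : IsMaximalOptimal η A P) :
    ∀ C₁ ∈ P, ∀ C₂ ∈ P,
      (convexHull ℝ C₁ ∩ square a₁ b₁ α).Nonempty →
      (convexHull ℝ C₁ ∩ square a₂ b₂ α).Nonempty →
      (convexHull ℝ C₂ ∩ square a₁ b₁ α).Nonempty →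
      (convexHull ℝ C₂ ∩ square a₂ b₂ α).Nonempty →
      C₁ = C₂ := by
  classical
  intro C₁ hC₁ C₂ hC₂ h11 h12 h21 h22
  by_contra hne
  obtain ⟨⟨⟨hnonempty, hcover, hdisj⟩, hopt⟩, -⟩ := hP
  obtain ⟨p₁, hp₁h, hp₁s⟩ := h11
  obtain ⟨q₁, hq₁h, hq₁s⟩ := h12
  obtain ⟨p₂, hp₂h, hp₂s⟩ := h21
  obtain ⟨q₂, hq₂h, hq₂s⟩ := h22
  have hC₁A : C₁ ⊆ A := hcover ▸ Set.subset_sUnion_of_mem (Finset.mem_coe.mpr hC₁)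
  have hC₂A : C₂ ⊆ A := hcover ▸ Set.subset_sUnion_of_mem (Finset.mem_coe.mpr hC₂)
  have hfin₁ : C₁.Finite := hA.subset hC₁A
  have hfin₂ : C₂.Finite := hA.subset hC₂A
  have hn₁ : C₁.Nonempty := hnonempty C₁ hC₁
  have hn₂ : C₂.Nonempty := hnonempty C₂ hC₂
  have hkey := key_ineq hα hfar hp₁s hq₁s hp₂s hq₂s
  have hmerge := perim_union_le hfin₁ hn₁ hfin₂ hn₂ hp₁h hq₁h hp₂h hq₂h hkey
  -- build the merged partition
  set Q : Finset (Set Plane) := insert (C₁ ∪ C₂) ((P.erase C₁).erase C₂) with hQ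
  have hC₂e : C₂ ∈ P.erase C₁ := Finset.mem_erase.mpr ⟨fun h => hne h.symm, hC₂⟩
  have hnotmem : (C₁ ∪ C₂ : Set Plane) ∉ (P.erase C₁).erase C₂ := by
    intro hmem
    have hDP : (C₁ ∪ C₂ : Set Plane) ∈ P :=
      Finset.mem_of_mem_erase (Finset.mem_of_mem_erase hmem)
    have hne1 : (C₁ ∪ C₂ : Set Plane) ≠ C₁ :=
      Finset.ne_of_mem_erase (Finset.mem_of_mem_erase hmem)
    have hd : Disjoint (C₁ ∪ C₂ : Set Plane) C₁ :=
      hdisj (Finset.mem_coe.mpr hDP) (Finset.mem_coe.mpr hC₁) hne1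
    obtain ⟨x, hx⟩ := hn₁
    exact Set.disjoint_left.mp hd (Set.mem_union_left _ hx) hx
  have hcard2 : 2 ≤ P.card := Finset.one_lt_card.mpr ⟨C₁, hC₁, C₂, hC₂, hne⟩
  have hcardQ : Q.card = P.card - 1 := by
    rw [hQ, Finset.card_insert_of_notMem hnotmem, Finset.card_erase_of_mem hC₂e,
      Finset.card_erase_of_mem hC₁]
    omega
  have hQpart : IsPartition A Q := by
    refine ⟨?_, ?_, ?_⟩
    · intro D hD
      rcases Finset.mem_insert.mp hD with rfl | hD'
      · exact hn₁.mono Set.subset_union_left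
      · exact hnonempty D (Finset.mem_of_mem_erase (Finset.mem_of_mem_erase hD'))
    · apply Set.Subset.antisymm
      · intro x hx
        obtain ⟨D, hD, hxD⟩ := hx
        rw [Finset.mem_coe, hQ, Finset.mem_insert] at hD
        rcases hD with rfl | hD'
        · rcases hxD with hx1 | hx2
          · exact hC₁A hx1
          · exact hC₂A hx2
        · rw [← hcover]
          exact ⟨D, Finset.mem_coe.mpr (Finset.mem_of_mem_erase
            (Finset.mem_of_mem_erase hD')), hxD⟩
      · intro x hx
        rw [← hcover] at hx
        obtain ⟨D, hD, hxD⟩ := hx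
        have hDP : D ∈ P := Finset.mem_coe.mp hD
        by_cases hD1 : D = C₁
        · exact ⟨C₁ ∪ C₂, Finset.mem_coe.mpr (Finset.mem_insert_self _ _),
            Set.mem_union_left _ (hD1 ▸ hxD)⟩
        by_cases hD2 : D = C₂
        · exact ⟨C₁ ∪ C₂, Finset.mem_coe.mpr (Finset.mem_insert_self _ _),
            Set.mem_union_right _ (hD2 ▸ hxD)⟩
        · exact ⟨D, Finset.mem_coe.mpr (Finset.mem_insert_of_mem
            (Finset.mem_erase.mpr ⟨hD2, Finset.mem_erase.mpr ⟨hD1, hDP⟩⟩)), hxD⟩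
    · intro X hX Y hY hXY
      have hmem : ∀ Z : Set Plane, Z ∈ (Q : Set (Set Plane)) →
          Z = C₁ ∪ C₂ ∨ (Z ∈ P ∧ Z ≠ C₁ ∧ Z ≠ C₂) := by
        intro Z hZ
        rw [Finset.mem_coe, hQ, Finset.mem_insert] at hZ
        rcases hZ with rfl | hZ'
        · exact Or.inl rfl
        · exact Or.inr ⟨Finset.mem_of_mem_erase (Finset.mem_of_mem_erase hZ'),
            Finset.ne_of_mem_erase (Finset.mem_of_mem_erase hZ'),
            Finset.ne_of_mem_erase hZ'⟩
      have hdisj' : ∀ D, D ∈ P → D ≠ C₁ → D ≠ C₂ → Disjoint (C₁ ∪ C₂ : Set Plane) D := by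
        intro D hD h1 h2
        have d1 : Disjoint C₁ D :=
          hdisj (Finset.mem_coe.mpr hC₁) (Finset.mem_coe.mpr hD) (fun h => h1 h.symm)
        have d2 : Disjoint C₂ D :=
          hdisj (Finset.mem_coe.mpr hC₂) (Finset.mem_coe.mpr hD) (fun h => h2 h.symm)
        exact Set.disjoint_union_left.mpr ⟨d1, d2⟩
      rcases hmem X hX with hXc | ⟨hXP, hX1, hX2⟩
      · rcases hmem Y hY with hYc | ⟨hYP, hY1, hY2⟩
        · exact absurd (hXc.trans hYc.symm) hXY
        · subst hXc
          exact hdisj' Y hYP hY1 hY2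
      · rcases hmem Y hY with hYc | ⟨hYP, hY1, hY2⟩
        · subst hYc
          exact (hdisj' X hXP hX1 hX2).symm
        · exact hdisj (Finset.mem_coe.mpr hXP) (Finset.mem_coe.mpr hYP) hXY
  have hsum : ∑ D ∈ Q, perim D = perim (C₁ ∪ C₂) + ((∑ D ∈ P, perim D) - perim C₁ - perim C₂) := by
    rw [hQ, Finset.sum_insert hnotmem, Finset.sum_erase_eq_sub hC₂e,
      Finset.sum_erase_eq_sub hC₁]
  have hcost : cost η Q < cost η P := by
    unfold cost
    rw [hsum, hcardQ]
    have hc : ((P.card - 1 : ℕ) : ℝ) = (P.card : ℝ) - 1 := by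
      rw [Nat.cast_sub (by omega)]
      norm_num
    rw [hc]
    nlinarith [hmerge, hη]
  exact absurd (hopt Q hQpart) (not_le.mpr hcost)

end
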